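/- Let 𝒞(x) = (x+1)·ln(x+1) − x and let a ≥ 0. Then the function x ↦ x·𝒞(a/x) is decreasing (antitone) on (0, ∞), and the function x ↦ 𝒞(a·x)/x² is decreasing (antitone) on (0, ∞). -/

import Mathlib

open Real

noncomputable section

/-- The Bennett function `𝒞(x) = (x+1)·ln(x+1) − x`. -/
def bennett (x : ℝ) : ℝ := (x + 1) * Real.log (x + 1) - x

lemma bennett_hasDerivAt {t : ℝ} (ht : 0 < t + 1) :
    HasDerivAt bennett (Real.log (t + 1)) t := by
  have h1 : HasDerivAt (fun x : ℝ => x + 1) 1 t := (hasDerivAt_id t).add_const 1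
  have h2 : HasDerivAt (fun x : ℝ => Real.log (x + 1)) (1 / (t + 1)) t := by
    simpa [Function.comp_def] using (Real.hasDerivAt_log ht.ne').comp t h1
  have h3 := (h1.mul h2).sub (hasDerivAt_id t)
  refine h3.congr_deriv ?_
  field_simp
  ring

lemma key_ineq {t : ℝ} (ht : 0 ≤ t) : 2 * t ≤ (t + 2) * Real.log (t + 1) := by
  set ψ : ℝ → ℝ := fun t => (t + 2) * Real.log (t + 1) - 2 * t with hψ
  have hd : ∀ s ∈ Set.Ici (0:ℝ), HasDerivAt ψ
      (Real.log (s + 1) + (s + 2) * (1 / (s + 1)) - 2) s := by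
    intro s hs
    have hs1 : (0:ℝ) < s + 1 := by simp at hs; linarith
    have h1 : HasDerivAt (fun x : ℝ => x + 2) 1 s := (hasDerivAt_id s).add_const 2
    have h2 : HasDerivAt (fun x : ℝ => Real.log (x + 1)) (1 / (s + 1)) s := by
      simpa [Function.comp_def] using (Real.hasDerivAt_log hs1.ne').comp s ((hasDerivAt_id s).add_const 1)
    have h3 := (h1.mul h2).sub ((hasDerivAt_id s).const_mul 2)
    refine h3.congr_deriv ?_
    ring
  have hmono : MonotoneOn ψ (Set.Ici 0) := by
    apply monotoneOn_of_deriv_nonneg (convex_Ici 0)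
    · exact fun s hs => ((hd s hs).differentiableAt.continuousAt).continuousWithinAt
    · intro s hs
      rw [interior_Ici] at hs
      exact ((hd s (Set.mem_Ici.mpr (le_of_lt hs))).differentiableAt).differentiableWithinAt
    · intro s hs
      rw [interior_Ici] at hs
      rw [(hd s (Set.mem_Ici.mpr (le_of_lt hs))).deriv]
      have hs0 : (0:ℝ) < s := hs
      have hs1 : (0:ℝ) < s + 1 := by linarith
      have hlog : 1 - (s + 1)⁻¹ ≤ Real.log (s + 1) :=
        Real.one_sub_inv_le_log_of_pos hs1
      have h2 : (s + 2) * (1 / (s + 1)) = 1 + (s + 1)⁻¹ := by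
        field_simp; ring
      rw [h2]; linarith
  have h0 : ψ 0 ≤ ψ t := hmono (by simp) (by simpa using ht) ht
  simp [hψ] at h0
  linarith

/-- For `a ≥ 0`, the functions `x ↦ x·𝒞(a/x)` and `x ↦ 𝒞(a·x)/x²`
are both antitone on `(0, ∞)`. -/
theorem bennett_monotonicity (a : ℝ) (ha : 0 ≤ a) :
    AntitoneOn (fun x : ℝ => x * bennett (a / x)) (Set.Ioi 0) ∧
    AntitoneOn (fun x : ℝ => bennett (a * x) / x ^ 2) (Set.Ioi 0) := by
  constructor
  · -- f(x) = x * bennett (a/x)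
    have hd : ∀ x ∈ Set.Ioi (0:ℝ), HasDerivAt (fun x : ℝ => x * bennett (a / x))
        (1 * bennett (a / x) + x * (Real.log (a / x + 1) * (a * -(x ^ 2)⁻¹))) x := by
      intro x hx
      have hx0 : (0:ℝ) < x := hx
      have hu : 0 ≤ a / x := div_nonneg ha hx0.le
      have h1 : HasDerivAt (fun y : ℝ => a / y) (a * -(x ^ 2)⁻¹) x := by
        simpa [div_eq_mul_inv] using (hasDerivAt_inv hx0.ne').const_mul a
      have h2 : HasDerivAt (fun y : ℝ => bennett (a / y))
          (Real.log (a / x + 1) * (a * -(x ^ 2)⁻¹)) x :=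
        (bennett_hasDerivAt (by linarith)).comp x h1
      exact (hasDerivAt_id x).mul h2
    apply antitoneOn_of_deriv_nonpos (convex_Ioi 0)
    · exact fun x hx => ((hd x hx).differentiableAt.continuousAt).continuousWithinAt
    · intro x hx
      rw [interior_Ioi] at hx
      exact ((hd x hx).differentiableAt).differentiableWithinAt
    · intro x hx
      rw [interior_Ioi] at hx
      rw [(hd x hx).deriv]
      have hx0 : (0:ℝ) < x := hx
      have hu : 0 ≤ a / x := div_nonneg ha hx0.le
      have hlog : Real.log (a / x + 1) ≤ a / x := by
        have := Real.log_le_sub_one_of_pos (x := a / x + 1) (by linarith)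
        linarith
      have hxx : x * (Real.log (a / x + 1) * (a * -(x ^ 2)⁻¹))
          = -(a / x * Real.log (a / x + 1)) := by
        field_simp
      rw [hxx]
      simp only [bennett, one_mul]
      nlinarith [mul_nonneg hu (Real.log_nonneg (by linarith : (1:ℝ) ≤ a / x + 1))]
  · -- g(x) = bennett (a*x) / x^2
    have hd : ∀ x ∈ Set.Ioi (0:ℝ), HasDerivAt (fun x : ℝ => bennett (a * x) / x ^ 2)
        ((Real.log (a * x + 1) * a * x ^ 2 - bennett (a * x) * (2 * x ^ 1)) / (x ^ 2) ^ 2) x := by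
      intro x hx
      have hx0 : (0:ℝ) < x := hx
      have ht : 0 ≤ a * x := mul_nonneg ha hx0.le
      have h1 : HasDerivAt (fun y : ℝ => a * y) a x := by
        simpa using (hasDerivAt_id x).const_mul a
      have h2 : HasDerivAt (fun y : ℝ => bennett (a * y)) (Real.log (a * x + 1) * a) x :=
        (bennett_hasDerivAt (by linarith)).comp x h1
      exact h2.div (hasDerivAt_pow 2 x) (pow_ne_zero 2 hx0.ne')
    apply antitoneOn_of_deriv_nonpos (convex_Ioi 0)
    · exact fun x hx => ((hd x hx).differentiableAt.continuousAt).continuousWithinAt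
    · intro x hx
      rw [interior_Ioi] at hx
      exact ((hd x hx).differentiableAt).differentiableWithinAt
    · intro x hx
      rw [interior_Ioi] at hx
      rw [(hd x hx).deriv]
      have hx0 : (0:ℝ) < x := hx
      have ht : 0 ≤ a * x := mul_nonneg ha hx0.le
      have hkey := key_ineq ht
      apply div_nonpos_of_nonpos_of_nonneg _ (by positivity)
      simp only [bennett, pow_one]
      nlinarith [hx0, hkey]
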